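/- Let ρ_B be defined on the ZF algebra generators by ρ_B(a(k)) = b(k) a(−k) and ρ_B(a†(k)) = a†(−k) b(−k), where b = T B T'⁻¹ satisfies the reflection equation, unitarity b(k)b(−k) = I, and the mixed exchange relations a₁ b₂ = R₂₁ b₂ R'₁₂ a₁ and b₁ a₂† = a₂† R₁₂ b₁ R'₂₁. Then α := ρ_B(a) satisfies the same ZF exchange relation as a: α₁(k₁) α₂(k₂) = R₂₁(k₂,k₁) α₂(k₂) α₁(k₁). -/
import Mathlib


open Matrix

/-- Operators on the tensor product of two auxiliary spaces. -/
abbrev TwoLeg (N : ℕ) (α : Type*) := Matrix (Fin N × Fin N) (Fin N × Fin N) α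

/-- Conjugation by the flip operator: `flipM M = P ∘ M ∘ P`. -/
def flipM {N : ℕ} {α : Type*} (M : TwoLeg N α) : TwoLeg N α :=
  Matrix.of fun p q => M (p.2, p.1) (q.2, q.1)

/-- Embedding of an `N×N` matrix into auxiliary space 1. -/
def leg1 {N : ℕ} {α : Type*} [MulZeroOneClass α] (M : Matrix (Fin N) (Fin N) α) :
    TwoLeg N α :=
  Matrix.of fun p q => if p.2 = q.2 then M p.1 q.1 else 0

/-- Embedding of an `N×N` matrix into auxiliary space 2. -/
def leg2 {N : ℕ} {α : Type*} [MulZeroOneClass α] (M : Matrix (Fin N) (Fin N) α) :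
    TwoLeg N α :=
  Matrix.of fun p q => if p.1 = q.1 then M p.2 q.2 else 0

/-- Map a complex matrix to a matrix over the algebra `A`. -/
def cmap {N : ℕ} (A : Type*) [Ring A] [Algebra ℂ A] (M : TwoLeg N ℂ) : TwoLeg N A :=
  M.map (algebraMap ℂ A)

/-- The matrix of reflection generators `b(k) = (bᵢⱼ(k))`. -/
def bmat {N : ℕ} {A : Type*} (b : Fin N → Fin N → ℝ → A) (k : ℝ) :
    Matrix (Fin N) (Fin N) A :=
  Matrix.of fun i j => b i j k

/-- `α(k) := ρ_B(a(k)) = b(k) a(−k)`. -/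
def alphaGen {N : ℕ} {A : Type*} [Ring A]
    (a : Fin N → ℝ → A) (b : Fin N → Fin N → ℝ → A) (i : Fin N) (k : ℝ) : A :=
  ∑ j : Fin N, b i j k * a j (-k)

section Helpers

variable {N : ℕ} {A : Type*} [Ring A] [Algebra ℂ A]

def flipV {N : ℕ} {A : Type*} (v : Fin N × Fin N → A) : Fin N × Fin N → A :=
  fun p => v (p.2, p.1)

lemma flipM_flipM {α : Type*} (M : TwoLeg N α) : flipM (flipM M) = M := rfl

lemma flipM_mul {α : Type*} [NonUnitalNonAssocSemiring α] (M M' : TwoLeg N α) :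
    flipM (M * M') = flipM M * flipM M' := by
  ext p q
  simp only [flipM, Matrix.mul_apply, Matrix.of_apply]
  exact Fintype.sum_equiv (Equiv.prodComm _ _) _ _ (fun r => rfl)

lemma flipM_leg1 (M : Matrix (Fin N) (Fin N) A) : flipM (leg1 M) = leg2 M := rfl

lemma flipM_leg2 (M : Matrix (Fin N) (Fin N) A) : flipM (leg2 M) = leg1 M := rfl

lemma flipM_cmap (M : TwoLeg N ℂ) : flipM (cmap A M) = cmap A (flipM M) := rfl

lemma cmap_mul (M M' : TwoLeg N ℂ) : cmap A (M * M') = cmap A M * cmap A M' :=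
  Matrix.map_mul

lemma cmap_one : cmap A (1 : TwoLeg N ℂ) = 1 :=
  Matrix.map_one _ (map_zero _) (map_one _)

lemma flipV_mulVec (M : TwoLeg N A) (v : Fin N × Fin N → A) :
    flipV (M *ᵥ v) = flipM M *ᵥ flipV v := by
  funext p
  simp only [flipV, flipM, Matrix.mulVec, dotProduct, Matrix.of_apply]
  exact Fintype.sum_equiv (Equiv.prodComm _ _) _ _ (fun r => rfl)

lemma leg1_mulVec (M : Matrix (Fin N) (Fin N) A) (v : Fin N × Fin N → A)
    (p : Fin N × Fin N) : (leg1 M *ᵥ v) p = ∑ r : Fin N, M p.1 r * v (r, p.2) := by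
  simp [Matrix.mulVec, dotProduct, leg1, Fintype.sum_prod_type, ite_mul]

lemma leg2_mulVec (M : Matrix (Fin N) (Fin N) A) (v : Fin N × Fin N → A)
    (p : Fin N × Fin N) : (leg2 M *ᵥ v) p = ∑ r : Fin N, M p.2 r * v (p.1, r) := by
  simp [Matrix.mulVec, dotProduct, leg2, Fintype.sum_prod_type, ite_mul]

lemma cmap_mulVec (M : TwoLeg N ℂ) (v : Fin N × Fin N → A) (p : Fin N × Fin N) :
    (cmap A M *ᵥ v) p = ∑ q : Fin N × Fin N, M p q • v q := by
  simp [Matrix.mulVec, dotProduct, cmap, Algebra.smul_def]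

end Helpers

section Key
set_option linter.unusedSectionVars false

variable {N : ℕ} {A : Type*} [Ring A] [Algebra ℂ A]
variable (R : ℝ → ℝ → TwoLeg N ℂ) (a : Fin N → ℝ → A) (b : Fin N → Fin N → ℝ → A)

lemma step_ab
    (hab : ∀ (k₁ k₂ : ℝ) (i m n : Fin N),
      a i k₁ * b m n k₂ =
        ∑ i₁ : Fin N, ∑ m₁ : Fin N, ∑ m₂ : Fin N, ∑ i₂ : Fin N,
          (R k₂ k₁ (m, i) (m₁, i₁) * R k₁ (-k₂) (i₁, m₂) (i₂, n)) •
            (b m₁ m₂ k₂ * a i₂ k₁))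
    (k₁ k₂ : ℝ) (p j : Fin N) :
    a p (-k₁) * alphaGen a b j k₂ =
      ∑ i₁ : Fin N, ∑ m₁ : Fin N,
        R k₂ (-k₁) (j, p) (m₁, i₁) •
          ∑ m₂ : Fin N, b m₁ m₂ k₂ *
            ∑ i₂ : Fin N, ∑ q : Fin N,
              R (-k₁) (-k₂) (i₁, m₂) (i₂, q) • (a i₂ (-k₁) * a q (-k₂)) := by
  rw [alphaGen, Finset.mul_sum]
  simp only [← mul_assoc]
  simp only [hab (-k₁) k₂ p j]
  simp only [Finset.sum_mul, smul_mul_assoc, Finset.mul_sum, Finset.smul_sum,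
    mul_smul_comm, smul_smul, mul_assoc]
  rw [Finset.sum_comm]
  refine Finset.sum_congr rfl fun i₁ _ => ?_
  rw [Finset.sum_comm]
  refine Finset.sum_congr rfl fun m₁ _ => ?_
  rw [Finset.sum_comm]
  refine Finset.sum_congr rfl fun m₂ _ => ?_
  rw [Finset.sum_comm]



lemma key0v
    (hab : ∀ (k₁ k₂ : ℝ) (i m n : Fin N),
      a i k₁ * b m n k₂ =
        ∑ i₁ : Fin N, ∑ m₁ : Fin N, ∑ m₂ : Fin N, ∑ i₂ : Fin N,
          (R k₂ k₁ (m, i) (m₁, i₁) * R k₁ (-k₂) (i₁, m₂) (i₂, n)) •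
            (b m₁ m₂ k₂ * a i₂ k₁))
    (k₁ k₂ : ℝ) :
    (fun z : Fin N × Fin N => alphaGen a b z.1 k₁ * alphaGen a b z.2 k₂) =
      (leg1 (bmat b k₁) * cmap A (flipM (R k₂ (-k₁))) * leg2 (bmat b k₂) *
        cmap A (R (-k₁) (-k₂))) *ᵥ
          (fun z : Fin N × Fin N => a z.1 (-k₁) * a z.2 (-k₂)) := by
  funext z
  obtain ⟨i, j⟩ := z
  rw [← Matrix.mulVec_mulVec, ← Matrix.mulVec_mulVec, ← Matrix.mulVec_mulVec,
    leg1_mulVec]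
  conv_lhs => rw [alphaGen]
  rw [Finset.sum_mul]
  refine Finset.sum_congr rfl fun r _ => ?_
  rw [mul_assoc, step_ab R a b hab k₁ k₂ r j]
  congr 1
  rw [cmap_mulVec]
  simp only [flipM, Matrix.of_apply, Fintype.sum_prod_type, leg2_mulVec, cmap_mulVec,
    bmat]



lemma step_aa
    (haa : ∀ (k₁ k₂ : ℝ) (i j : Fin N),
      a i k₁ * a j k₂ =
        ∑ i' : Fin N, ∑ j' : Fin N,
          R k₂ k₁ (j, i) (j', i') • (a j' k₂ * a i' k₁))
    (k₁ k₂ : ℝ) :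
    (fun z : Fin N × Fin N => a z.1 (-k₁) * a z.2 (-k₂)) =
      cmap A (flipM (R (-k₂) (-k₁))) *ᵥ
        (fun z : Fin N × Fin N => a z.2 (-k₂) * a z.1 (-k₁)) := by
  funext z
  obtain ⟨x, y⟩ := z
  rw [haa (-k₁) (-k₂) x y, cmap_mulVec]
  simp only [flipM, Matrix.of_apply, Fintype.sum_prod_type]



end Key

/-- `α := ρ_B(a) = b a'` satisfies the same ZF exchange relation as
`a`: `α₁(k₁) α₂(k₂) = R₂₁(k₂,k₁) α₂(k₂) α₁(k₁)`. -/
theorem alpha_exchange {N : ℕ} {A : Type*} [Ring A] [Algebra ℂ A]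
    (R : ℝ → ℝ → TwoLeg N ℂ)
    (a : Fin N → ℝ → A) (b : Fin N → Fin N → ℝ → A)
    (hunit : ∀ k₁ k₂ : ℝ, R k₁ k₂ * flipM (R k₂ k₁) = 1)
    (haa : ∀ (k₁ k₂ : ℝ) (i j : Fin N),
      a i k₁ * a j k₂ =
        ∑ i' : Fin N, ∑ j' : Fin N,
          R k₂ k₁ (j, i) (j', i') • (a j' k₂ * a i' k₁))
    (hab : ∀ (k₁ k₂ : ℝ) (i m n : Fin N),
      a i k₁ * b m n k₂ =
        ∑ i₁ : Fin N, ∑ m₁ : Fin N, ∑ m₂ : Fin N, ∑ i₂ : Fin N,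
          (R k₂ k₁ (m, i) (m₁, i₁) * R k₁ (-k₂) (i₁, m₂) (i₂, n)) •
            (b m₁ m₂ k₂ * a i₂ k₁))
    (hrefl : ∀ k₁ k₂ : ℝ,
      cmap A (R k₁ k₂) * leg1 (bmat b k₁) * cmap A (flipM (R k₂ (-k₁))) *
          leg2 (bmat b k₂) =
        leg2 (bmat b k₂) * cmap A (R k₁ (-k₂)) * leg1 (bmat b k₁) *
          cmap A (flipM (R (-k₂) (-k₁)))) :
    ∀ (k₁ k₂ : ℝ) (i j : Fin N),
      alphaGen a b i k₁ * alphaGen a b j k₂ =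
        ∑ i' : Fin N, ∑ j' : Fin N,
          R k₂ k₁ (j, i) (j', i') • (alphaGen a b j' k₂ * alphaGen a b i' k₁) := by
  intro k₁ k₂ i j
  -- left inverse of R k₁ k₂
  have hRL : cmap A (flipM (R k₂ k₁)) * cmap A (R k₁ k₂) = 1 := by
    rw [← cmap_mul, mul_eq_one_comm.mp (hunit k₁ k₂), cmap_one]
  have hcontr : cmap A (R (-k₁) (-k₂)) * cmap A (flipM (R (-k₂) (-k₁))) = 1 := by
    rw [← cmap_mul, hunit (-k₁) (-k₂), cmap_one]
  -- LHS in matrix form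
  have hL : alphaGen a b i k₁ * alphaGen a b j k₂ =
      ((leg1 (bmat b k₁) * cmap A (flipM (R k₂ (-k₁))) * leg2 (bmat b k₂)) *ᵥ
        (fun z : Fin N × Fin N => a z.2 (-k₂) * a z.1 (-k₁))) (i, j) := by
    have h0 := congrFun (key0v R a b hab k₁ k₂) (i, j)
    rw [h0, step_aa R a haa k₁ k₂, Matrix.mulVec_mulVec, mul_assoc _ (cmap A (R (-k₁) (-k₂))),
      hcontr, mul_one]
  -- RHS in matrix form
  have hR : (∑ i' : Fin N, ∑ j' : Fin N,
        R k₂ k₁ (j, i) (j', i') • (alphaGen a b j' k₂ * alphaGen a b i' k₁)) =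
      ((cmap A (flipM (R k₂ k₁)) *
          (leg2 (bmat b k₂) * cmap A (R k₁ (-k₂)) * leg1 (bmat b k₁) *
            cmap A (flipM (R (-k₂) (-k₁))))) *ᵥ
        (fun z : Fin N × Fin N => a z.2 (-k₂) * a z.1 (-k₁))) (i, j) := by
    rw [← Matrix.mulVec_mulVec, cmap_mulVec]
    have hflip : (fun z : Fin N × Fin N => alphaGen a b z.2 k₂ * alphaGen a b z.1 k₁) =
        (leg2 (bmat b k₂) * cmap A (R k₁ (-k₂)) * leg1 (bmat b k₁) *
            cmap A (flipM (R (-k₂) (-k₁)))) *ᵥ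
          (fun z : Fin N × Fin N => a z.2 (-k₂) * a z.1 (-k₁)) := by
      have h1 : (fun z : Fin N × Fin N => alphaGen a b z.2 k₂ * alphaGen a b z.1 k₁) =
          flipV (fun z : Fin N × Fin N => alphaGen a b z.1 k₂ * alphaGen a b z.2 k₁) := rfl
      rw [h1, key0v R a b hab k₂ k₁, flipV_mulVec]
      have h2 : flipV (fun z : Fin N × Fin N => a z.1 (-k₂) * a z.2 (-k₁)) =
          (fun z : Fin N × Fin N => a z.2 (-k₂) * a z.1 (-k₁)) := rfl
      rw [h2, flipM_mul, flipM_mul, flipM_mul, flipM_leg1, flipM_leg2, flipM_cmap,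
        flipM_cmap, flipM_flipM]
    rw [← hflip]
    simp only [flipM, Matrix.of_apply, Fintype.sum_prod_type]
  rw [hL, hR, ← hrefl k₁ k₂, ← mul_assoc, ← mul_assoc, ← mul_assoc, hRL, one_mul]
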